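/- Let 0 < α ≤ 1/2 and let f_α : ℝ → ℝ ∪ {+∞} be defined by f_α(λ) := −λ^α for λ ≥ 0 and f_α(λ) := +∞ for λ < 0. Let φ1 be a unit vector and ρ2 a density matrix on the same finite-dimensional space with ⟨φ1|ρ2|φ1⟩ ≠ 0. Then D_{f_α}^min(|φ1⟩⟨φ1| ‖ ρ2) = −(⟨φ1|ρ2|φ1⟩)^{1−α}. -/

import Mathlib

open Filter Matrix
open scoped ComplexOrder
open scoped BigOperators

noncomputable section

attribute [local instance] Classical.propDecidable

/-- The effective domain of an extended-real-valued function. -/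
def edom (f : ℝ → EReal) : Set ℝ := {x | f x < ⊤}

/-- The convex conjugate `f*`(t) = sup_λ (t·λ − f(λ)). -/
def econj (f : ℝ → EReal) (t : ℝ) : EReal := ⨆ l : ℝ, ((t * l : ℝ) : EReal) - f l

/-- The function `g` associated to `f`, i.e. the lsc positively homogeneous
extension of `(λ1,λ2) ↦ λ2 f(λ1/λ2)`. -/
def gfun (f : ℝ → EReal) (l1 l2 : ℝ) : EReal :=
  if l1 = 0 ∧ l2 = 0 then 0
  else if l1 ∈ edom f ∧ 0 < l2 then ((l2 : ℝ) : EReal) * f (l1 / l2)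
  else if l1 ∈ edom f ∧ l2 = 0 then
    limUnder (nhdsWithin 0 (Set.Ioi 0)) fun u : ℝ => ((u : ℝ) : EReal) * f (l1 / u)
  else ⊤

/-- A finite-outcome POVM. -/
def IsPOVM {n m : ℕ} (M : Fin m → Matrix (Fin n) (Fin n) ℂ) : Prop :=
  (∀ x, (M x).PosSemidef) ∧ ∑ x, M x = 1

/-- The maximized measured f-divergence `D_f^min`. -/
def Dfmin (f : ℝ → EReal) {n : ℕ} (ρ1 ρ2 : Matrix (Fin n) (Fin n) ℂ) : EReal :=
  ⨆ (m : ℕ) (M : Fin m → Matrix (Fin n) (Fin n) ℂ) (_ : IsPOVM M),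
    ∑ x, gfun f ((ρ1 * M x).trace.re) ((ρ2 * M x).trace.re)

/-- Functional calculus on a Hermitian matrix: apply `h` to the eigenvalues. -/
def hermFC {k : ℕ} (h : ℝ → ℝ) {A : Matrix (Fin k) (Fin k) ℂ} (hA : A.IsHermitian) :
    Matrix (Fin k) (Fin k) ℂ :=
  (hA.eigenvectorUnitary : Matrix (Fin k) (Fin k) ℂ) *
    Matrix.diagonal (fun i => (h (hA.eigenvalues i) : ℂ)) *
    (star (hA.eigenvectorUnitary : Matrix (Fin k) (Fin k) ℂ))

/-- The spectrum of the Hermitian matrix `A` is contained in `S`. -/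
def specIn {k : ℕ} {A : Matrix (Fin k) (Fin k) ℂ} (hA : A.IsHermitian) (S : Set ℝ) : Prop :=
  ∀ i, hA.eigenvalues i ∈ S

/-- The Loewner order: `A ≤ B`. -/
def Loewner {k : ℕ} (A B : Matrix (Fin k) (Fin k) ℂ) : Prop := (B - A).PosSemidef

/-- Operator convexity of a real function on a set `S` (midpoint form, via
the functional calculus on Hermitian matrices with spectrum in `S`). -/
def OpConvexOn (h : ℝ → ℝ) (S : Set ℝ) : Prop :=
  ∀ (k : ℕ), 1 ≤ k → ∀ (A B : Matrix (Fin k) (Fin k) ℂ)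
    (hA : A.IsHermitian) (hB : B.IsHermitian) (hM : ((1/2 : ℂ) • (A + B)).IsHermitian),
    specIn hA S → specIn hB S →
    Loewner (hermFC h hM) ((1/2 : ℂ) • (hermFC h hA + hermFC h hB))

/-- The real-valued version of the convex conjugate of `f` (used for the
functional calculus; on `dom f*` it agrees with `f*` when `f` is proper). -/
def econjR (f : ℝ → EReal) (t : ℝ) : ℝ := (econj f t).toReal

/-- Condition (I): `f*` is operator convex on its effective domain. -/
def CondI (f : ℝ → EReal) : Prop := OpConvexOn (econjR f) (edom (econj f))

/-- `f` is a proper lower semicontinuous convex function with `dom f ⊇ (0,∞)`. -/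
structure NiceF (f : ℝ → EReal) : Prop where
  ne_bot : ∀ x, f x ≠ ⊥
  ne_top : ∃ x, f x ≠ ⊤
  lsc : LowerSemicontinuous f
  convex : ∀ x y a b : ℝ, 0 ≤ a → 0 ≤ b → a + b = 1 →
    f (a * x + b * y) ≤ ((a : ℝ) : EReal) * f x + ((b : ℝ) : EReal) * f y
  dom : Set.Ioi (0 : ℝ) ⊆ edom f

/-- `f_α(λ) = −λ^α` for `λ ≥ 0`, `+∞` for `λ < 0` (here `0 < α < 1`). -/
def falpha (α : ℝ) : ℝ → EReal := fun l => if 0 ≤ l then ((-(l ^ α) : ℝ) : EReal) else ⊤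


section Helpers

variable {n : ℕ}

open scoped MatrixOrder in
/-- square root of a PSD matrix (replacement for the removed Mathlib definition). -/
def Matrix.PosSemidef.sqrt {A : Matrix (Fin n) (Fin n) ℂ} (_hA : A.PosSemidef) :
    Matrix (Fin n) (Fin n) ℂ := CFC.sqrt A

open scoped MatrixOrder in
lemma Matrix.PosSemidef.posSemidef_sqrt {A : Matrix (Fin n) (Fin n) ℂ} (hA : A.PosSemidef) :
    hA.sqrt.PosSemidef := Matrix.nonneg_iff_posSemidef.mp (CFC.sqrt_nonneg A)

open scoped MatrixOrder in
lemma Matrix.PosSemidef.sqrt_mul_self {A : Matrix (Fin n) (Fin n) ℂ} (hA : A.PosSemidef) :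
    hA.sqrt * hA.sqrt = A := CFC.sqrt_mul_sqrt_self A hA.nonneg

private lemma re_dot_self' (x : Fin n → ℂ) : (star x ⬝ᵥ x).re = ∑ i, Complex.normSq (x i) := by
  simp [dotProduct, Complex.normSq_apply, Complex.mul_re, mul_comm]

private lemma im_dot_self' (x : Fin n → ℂ) : (star x ⬝ᵥ x).im = 0 := by
  simp [dotProduct, Complex.im_sum, Complex.mul_im, mul_comm]

private lemma dot_self_real (x : Fin n → ℂ) :
    star x ⬝ᵥ x = (((star x ⬝ᵥ x).re : ℝ) : ℂ) :=
  Complex.ext (by simp) (by simp [im_dot_self' x])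

private lemma cs_dot (x y : Fin n → ℂ) :
    ‖star x ⬝ᵥ y‖ ^ 2 ≤ (star x ⬝ᵥ x).re * (star y ⬝ᵥ y).re := by
  have h1 : ‖star x ⬝ᵥ y‖ ≤ ∑ i, ‖x i‖ * ‖y i‖ := by
    refine le_trans (norm_sum_le Finset.univ (fun i => star x i * y i)) ?_
    refine Finset.sum_le_sum fun i _ => ?_
    simp [Pi.star_apply, norm_mul]
  have h2 := Finset.sum_mul_sq_le_sq_mul_sq Finset.univ
      (fun i => ‖x i‖) (fun i => ‖y i‖)
  calc ‖star x ⬝ᵥ y‖ ^ 2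
      ≤ (∑ i, ‖x i‖ * ‖y i‖) ^ 2 := by
        exact pow_le_pow_left₀ (norm_nonneg _) h1 2
    _ ≤ (∑ i, ‖x i‖ ^ 2) * ∑ i, ‖y i‖ ^ 2 := h2
    _ = _ := by rw [re_dot_self', re_dot_self']; simp [Complex.sq_norm]

private lemma dot_conjTranspose_mul (C : Matrix (Fin n) (Fin n) ℂ) (x y : Fin n → ℂ) :
    star x ⬝ᵥ ((Cᴴ * C).mulVec y) = star (C.mulVec x) ⬝ᵥ (C.mulVec y) := by
  rw [Matrix.star_mulVec, ← Matrix.mulVec_mulVec, Matrix.dotProduct_mulVec,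
    Matrix.dotProduct_mulVec, Matrix.vecMul_vecMul]

private lemma dot_sqrt {A : Matrix (Fin n) (Fin n) ℂ} (hA : A.PosSemidef) (x y : Fin n → ℂ) :
    star x ⬝ᵥ A.mulVec y = star (hA.sqrt.mulVec x) ⬝ᵥ (hA.sqrt.mulVec y) := by
  rw [← dot_conjTranspose_mul]
  congr 1
  rw [hA.posSemidef_sqrt.1.eq, hA.sqrt_mul_self]

private lemma psd_re_nonneg {A : Matrix (Fin n) (Fin n) ℂ} (hA : A.PosSemidef) (x : Fin n → ℂ) :
    0 ≤ (star x ⬝ᵥ A.mulVec x).re :=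
  ((Complex.nonneg_iff).mp (hA.dotProduct_mulVec_nonneg x)).1

private lemma psd_form_eq_re {A : Matrix (Fin n) (Fin n) ℂ} (hA : A.PosSemidef) (x : Fin n → ℂ) :
    star x ⬝ᵥ A.mulVec x = (((star x ⬝ᵥ A.mulVec x).re : ℝ) : ℂ) := by
  have h := (Complex.nonneg_iff).mp (hA.dotProduct_mulVec_nonneg x)
  exact Complex.ext (by simp) (by simp [h.2.symm])

private lemma psd_diag_re_nonneg {A : Matrix (Fin n) (Fin n) ℂ} (hA : A.PosSemidef) (i : Fin n) :
    0 ≤ (A i i).re := by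
  have h := psd_re_nonneg hA (Pi.single i 1)
  have e : star (Pi.single i 1 : Fin n → ℂ) ⬝ᵥ A.mulVec (Pi.single i 1) = A i i := by
    simp [dotProduct, mulVec, Pi.single_apply]
  rwa [e] at h

private lemma psd_trace_re_nonneg {A : Matrix (Fin n) (Fin n) ℂ} (hA : A.PosSemidef) :
    0 ≤ A.trace.re := by
  rw [Matrix.trace, Complex.re_sum]
  exact Finset.sum_nonneg fun i _ => psd_diag_re_nonneg hA i

private lemma trace_mul_psd_nonneg {A B : Matrix (Fin n) (Fin n) ℂ} (hA : A.PosSemidef)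
    (hB : B.PosSemidef) : 0 ≤ ((A * B).trace).re := by
  have h : (A * B).trace = (hB.sqrt * A * hB.sqrt).trace := by
    conv_lhs => rw [← hB.sqrt_mul_self, ← Matrix.mul_assoc]
    rw [Matrix.trace_mul_cycle]
  rw [h]
  have h' := hA.mul_mul_conjTranspose_same hB.sqrt
  rw [hB.posSemidef_sqrt.1.eq] at h'
  exact psd_trace_re_nonneg h'

private lemma frobenius_bound (C : Matrix (Fin n) (Fin n) ℂ) (v : Fin n → ℂ) :
    (star (C.mulVec v) ⬝ᵥ (C.mulVec v)).re ≤ (Cᴴ * C).trace.re * (star v ⬝ᵥ v).re := by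
  have htr : (Cᴴ * C).trace.re = ∑ i, ∑ j, Complex.normSq (C i j) := by
    rw [Matrix.trace, Complex.re_sum]
    rw [Finset.sum_comm]
    refine Finset.sum_congr rfl fun j _ => ?_
    simp [Matrix.diag, Matrix.mul_apply, Complex.re_sum, Matrix.conjTranspose_apply,
      Complex.normSq_apply, Complex.mul_re]
  rw [htr, re_dot_self', Finset.sum_mul]
  refine Finset.sum_le_sum fun i _ => ?_
  have h : (C.mulVec v) i = star (star (C i)) ⬝ᵥ v := by simp [Matrix.mulVec]
  have hcs := cs_dot (star (C i)) v
  rw [← h] at hcs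
  have h2 : (star (star (C i)) ⬝ᵥ star (C i)).re = ∑ j, Complex.normSq (C i j) := by
    rw [re_dot_self']
    simp [Complex.normSq_conj]
  rw [h2, re_dot_self'] at hcs
  calc Complex.normSq (C.mulVec v i) = ‖C.mulVec v i‖ ^ 2 := (Complex.sq_norm _).symm
    _ ≤ _ := by rw [re_dot_self']; exact hcs

private lemma holder_sum {m : ℕ} (a b : Fin m → ℝ) (ha : ∀ i, 0 ≤ a i) (hb : ∀ i, 0 ≤ b i)
    {θ : ℝ} (hθ0 : 0 < θ) (hθ1 : θ ≤ 1) :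
    ∑ i, (a i) ^ θ * (b i) ^ (1 - θ) ≤ (∑ i, a i) ^ θ * (∑ i, b i) ^ (1 - θ) := by
  set A := ∑ i, a i with hA
  set B := ∑ i, b i with hB
  have hA0 : 0 ≤ A := Finset.sum_nonneg fun i _ => ha i
  have hB0 : 0 ≤ B := Finset.sum_nonneg fun i _ => hb i
  rcases eq_or_lt_of_le hA0 with hAz | hApos
  · have hai : ∀ i ∈ Finset.univ, a i = 0 :=
      (Finset.sum_eq_zero_iff_of_nonneg (fun i _ => ha i)).mp hAz.symm
    have h : ∀ i ∈ Finset.univ, a i ^ θ * b i ^ (1 - θ) = 0 := fun i hi => by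
      rw [hai i hi, Real.zero_rpow (ne_of_gt hθ0), zero_mul]
    rw [Finset.sum_congr rfl h, Finset.sum_const, smul_zero,
      ← hAz, Real.zero_rpow (ne_of_gt hθ0), zero_mul]
  rcases eq_or_lt_of_le hB0 with hBz | hBpos
  · rcases eq_or_lt_of_le hθ1 with hθe | hθlt
    · simp only [hθe, sub_self, Real.rpow_zero, mul_one, Real.rpow_one]
      exact le_of_eq rfl
    · have hbi : ∀ i ∈ Finset.univ, b i = 0 :=
        (Finset.sum_eq_zero_iff_of_nonneg (fun i _ => hb i)).mp hBz.symm
      have h : ∀ i ∈ Finset.univ, a i ^ θ * b i ^ (1 - θ) = 0 := fun i hi => by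
        rw [hbi i hi, Real.zero_rpow (by linarith), mul_zero]
      rw [Finset.sum_congr rfl h, Finset.sum_const, smul_zero,
        ← hBz, Real.zero_rpow (by linarith), mul_zero]
  · have key : ∀ i, a i ^ θ * b i ^ (1 - θ)
        = (A ^ θ * B ^ (1 - θ)) * ((a i / A) ^ θ * (b i / B) ^ (1 - θ)) := by
      intro i
      rw [Real.div_rpow (ha i) hA0, Real.div_rpow (hb i) hB0]
      have h1 : A ^ θ ≠ 0 := ne_of_gt (Real.rpow_pos_of_pos hApos θ)
      have h2 : B ^ (1 - θ) ≠ 0 := ne_of_gt (Real.rpow_pos_of_pos hBpos (1 - θ))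
      field_simp
    calc ∑ i, a i ^ θ * b i ^ (1 - θ)
        = (A ^ θ * B ^ (1 - θ)) * ∑ i, (a i / A) ^ θ * (b i / B) ^ (1 - θ) := by
          rw [Finset.mul_sum]; exact Finset.sum_congr rfl fun i _ => key i
      _ ≤ (A ^ θ * B ^ (1 - θ)) * 1 := by
          refine mul_le_mul_of_nonneg_left ?_
            (mul_nonneg (Real.rpow_nonneg hA0 _) (Real.rpow_nonneg hB0 _))
          have h : ∑ i, (θ * (a i / A) + (1 - θ) * (b i / B)) = 1 := by
            rw [Finset.sum_add_distrib, ← Finset.mul_sum, ← Finset.mul_sum,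
              ← Finset.sum_div, ← Finset.sum_div, ← hA, ← hB,
              div_self (ne_of_gt hApos), div_self (ne_of_gt hBpos)]
            ring
          refine le_trans (Finset.sum_le_sum fun i _ => ?_) (le_of_eq h)
          exact Real.geom_mean_le_arith_mean2_weighted hθ0.le (by linarith)
            (div_nonneg (ha i) hA0) (div_nonneg (hb i) hB0) (by ring)
      _ = A ^ θ * B ^ (1 - θ) := mul_one _

private lemma coe_sum' {m : ℕ} (f : Fin m → ℝ) :
    ((∑ i, f i : ℝ) : EReal) = ∑ i, ((f i : ℝ) : EReal) :=
  map_sum (⟨⟨Real.toEReal, EReal.coe_zero⟩, EReal.coe_add⟩ : ℝ →+ EReal) f Finset.univ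

private lemma falpha_of_nonneg {α l : ℝ} (hl : 0 ≤ l) :
    falpha α l = ((-(l ^ α) : ℝ) : EReal) := by
  simp [falpha, hl]

private lemma mem_edom_falpha {α l : ℝ} (hl : 0 ≤ l) : l ∈ edom (falpha α) := by
  simp only [edom, Set.mem_setOf_eq, falpha_of_nonneg hl]
  exact EReal.coe_lt_top _

private lemma gfun_falpha {α : ℝ} (hα0 : 0 < α) (hα1 : α < 1) {p q : ℝ}
    (hp : 0 ≤ p) (hq : 0 ≤ q) :
    gfun (falpha α) p q = ((-(p ^ α * q ^ (1 - α)) : ℝ) : EReal) := by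
  rcases eq_or_lt_of_le hq with hq0 | hqpos
  · subst hq0
    by_cases hp0 : p = 0
    · subst hp0
      rw [gfun, if_pos ⟨rfl, rfl⟩]
      rw [Real.zero_rpow (ne_of_gt hα0)]
      norm_num
    · have hppos : 0 < p := lt_of_le_of_ne hp (Ne.symm hp0)
      rw [gfun, if_neg (fun h => hp0 h.1), if_neg (fun h => lt_irrefl 0 h.2),
        if_pos ⟨mem_edom_falpha hp, rfl⟩]
      have hlim : Tendsto (fun u : ℝ => ((u : ℝ) : EReal) * falpha α (p / u))
          (nhdsWithin 0 (Set.Ioi 0)) (nhds ((0 : ℝ) : EReal)) := by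
        have hev : ∀ᶠ u in nhdsWithin (0:ℝ) (Set.Ioi 0),
            ((-(p ^ α * u ^ (1 - α)) : ℝ) : EReal) = ((u : ℝ) : EReal) * falpha α (p / u) := by
          filter_upwards [self_mem_nhdsWithin] with u hu
          have hu0 : 0 < u := hu
          rw [falpha_of_nonneg (le_of_lt (div_pos hppos hu0)), ← EReal.coe_mul]
          congr 1
          rw [Real.div_rpow hp hu0.le, Real.rpow_sub hu0, Real.rpow_one]
          ring
        refine Tendsto.congr' hev ?_
        rw [EReal.tendsto_coe]
        have ht : Tendsto (fun u : ℝ => -(p ^ α * u ^ (1 - α))) (nhdsWithin 0 (Set.Ioi 0))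
            (nhds (-(p ^ α * (0:ℝ) ^ (1 - α)))) := by
          refine Tendsto.neg (Tendsto.const_mul _ ?_)
          have hc : ContinuousAt (fun u : ℝ => u ^ (1 - α)) 0 :=
            Real.continuousAt_rpow_const 0 (1 - α) (Or.inr (by linarith))
          exact hc.continuousWithinAt
        rwa [Real.zero_rpow (by linarith : (1:ℝ) - α ≠ 0), mul_zero, neg_zero] at ht
      rw [hlim.limUnder_eq, Real.zero_rpow (by linarith : (1:ℝ) - α ≠ 0), mul_zero, neg_zero]
  · rw [gfun, if_neg (fun h => absurd h.2 (ne_of_gt hqpos)), if_pos ⟨mem_edom_falpha hp, hqpos⟩]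
    rw [falpha_of_nonneg (div_nonneg hp hqpos.le), ← EReal.coe_mul]
    congr 1
    rw [Real.div_rpow hp hqpos.le, Real.rpow_sub hqpos, Real.rpow_one]
    ring

private lemma rpow_split {α : ℝ} (hα0 : 0 < α) (hα : α ≤ 1/2) {p q : ℝ}
    (hp : 0 ≤ p) (hq : 0 ≤ q) :
    p ^ (1/2 : ℝ) * q ^ (1/2 : ℝ)
      = (p ^ α * q ^ (1 - α)) ^ (1 / (2 * (1 - α))) * p ^ (1 - 1 / (2 * (1 - α))) := by
  have h1α : (0:ℝ) < 1 - α := by linarith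
  have hθq : (1 - α) * (1 / (2 * (1 - α))) = 1/2 := by field_simp
  rw [Real.mul_rpow (Real.rpow_nonneg hp _) (Real.rpow_nonneg hq _),
    ← Real.rpow_mul hp, ← Real.rpow_mul hq, hθq]
  rcases eq_or_lt_of_le hp with hpz | hppos
  · rw [← hpz]
    by_cases hθ1 : 1 - 1 / (2 * (1 - α)) = 0
    · have h2 : 1 / (2 * (1 - α)) = 1 := by linarith
      rw [hθ1, Real.rpow_zero, mul_one, h2, mul_one]
      have h3 : α = 1/2 := by
        have h4 : 2 * (1 - α) = 1 := by
          field_simp at h2; linarith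
        linarith
      rw [h3]
    · rw [Real.zero_rpow hθ1, Real.zero_rpow (by norm_num : (1/2:ℝ) ≠ 0)]
      ring
  · have hexp : α * (1 / (2 * (1 - α))) + (1 - 1 / (2 * (1 - α))) = 1/2 := by
      field_simp
      ring
    rw [mul_right_comm, ← Real.rpow_add hppos, hexp]

private lemma conj_form {S : Matrix (Fin n) (Fin n) ℂ} (hS : S.IsHermitian)
    (N : Matrix (Fin n) (Fin n) ℂ) (a b : Fin n → ℂ) :
    star (S.mulVec a) ⬝ᵥ (N.mulVec (S.mulVec b)) = star a ⬝ᵥ ((S * N * S).mulVec b) := by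
  rw [Matrix.star_mulVec, hS.eq, Matrix.mulVec_mulVec, Matrix.dotProduct_mulVec,
    Matrix.dotProduct_mulVec, Matrix.vecMul_vecMul, Matrix.mul_assoc]

private lemma dot_mulVec_sum {m : ℕ} (u φ : Fin n → ℂ) (M : Fin m → Matrix (Fin n) (Fin n) ℂ) :
    ∑ x, u ⬝ᵥ (M x).mulVec φ = u ⬝ᵥ (∑ x, M x).mulVec φ := by
  simp only [dotProduct, Matrix.mulVec, Matrix.sum_apply, Finset.mul_sum, Finset.sum_mul]
  rw [Finset.sum_comm]
  exact Finset.sum_congr rfl fun i _ => Finset.sum_comm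

private lemma trace_vecMulVec_mul (a b : Fin n → ℂ) (M : Matrix (Fin n) (Fin n) ℂ) :
    (Matrix.vecMulVec a b * M).trace = b ⬝ᵥ M.mulVec a := by
  simp only [Matrix.trace, Matrix.diag, Matrix.mul_apply, Matrix.vecMulVec_apply,
    dotProduct, Matrix.mulVec, Finset.mul_sum]
  rw [Finset.sum_comm]
  refine Finset.sum_congr rfl fun j _ => Finset.sum_congr rfl fun i _ => by ring

private lemma key_ineq {α : ℝ} (hα0 : 0 < α) (hα : α ≤ 1/2) {m : ℕ}
    (φ : Fin n → ℂ) (hφ : star φ ⬝ᵥ φ = 1)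
    (ρ2 : Matrix (Fin n) (Fin n) ℂ) (h2 : ρ2.PosSemidef)
    (M : Fin m → Matrix (Fin n) (Fin n) ℂ) (hM : IsPOVM M) :
    ((star φ ⬝ᵥ ρ2.mulVec φ).re) ^ (1 - α) ≤
      ∑ x, ((star φ ⬝ᵥ (M x).mulVec φ).re) ^ α * (((ρ2 * M x).trace).re) ^ (1 - α) := by
  classical
  set c : ℝ := (star φ ⬝ᵥ ρ2.mulVec φ).re with hc
  have hc0 : 0 ≤ c := psd_re_nonneg h2 φ
  set p : Fin m → ℝ := fun x => (star φ ⬝ᵥ (M x).mulVec φ).re with hpdef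
  set q : Fin m → ℝ := fun x => ((ρ2 * M x).trace).re with hqdef
  have hp0 : ∀ x, 0 ≤ p x := fun x => psd_re_nonneg (hM.1 x) φ
  have hq0 : ∀ x, 0 ≤ q x := fun x => trace_mul_psd_nonneg h2 (hM.1 x)
  have hQ0 : 0 ≤ ∑ x, p x ^ α * q x ^ (1 - α) :=
    Finset.sum_nonneg fun x _ =>
      mul_nonneg (Real.rpow_nonneg (hp0 x) _) (Real.rpow_nonneg (hq0 x) _)
  rcases eq_or_lt_of_le hc0 with hcz | hcpos
  · rw [← hcz, Real.zero_rpow (by linarith : (1:ℝ) - α ≠ 0)]; exact hQ0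
  set S := h2.sqrt with hS
  have hSh : S.IsHermitian := h2.posSemidef_sqrt.1
  set u : Fin n → ℂ := ρ2.mulVec φ with hu
  set v : Fin n → ℂ := S.mulVec φ with hv
  have huv : u = S.mulVec v := by
    rw [hu, hv, Matrix.mulVec_mulVec, h2.sqrt_mul_self]
  have hsum_t : ∑ x, star u ⬝ᵥ (M x).mulVec φ = (c : ℂ) := by
    rw [dot_mulVec_sum, hM.2, Matrix.one_mulVec]
    have h2' : star φ ⬝ᵥ u = (c : ℂ) := by rw [hc]; exact psd_form_eq_re h2 φ
    calc star u ⬝ᵥ φ = star (star φ ⬝ᵥ u) := by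
          rw [Matrix.star_dotProduct]
      _ = (c : ℂ) := by rw [h2', Complex.star_def, Complex.conj_ofReal]
  have habs : ∀ x, ‖star u ⬝ᵥ (M x).mulVec φ‖ ^ 2 ≤ (c * p x) * q x := by
    intro x
    set B := (hM.1 x).sqrt with hB
    have hBh : B.IsHermitian := (hM.1 x).posSemidef_sqrt.1
    have e1 : star u ⬝ᵥ (M x).mulVec φ = star (B.mulVec u) ⬝ᵥ (B.mulVec φ) :=
      dot_sqrt (hM.1 x) u φ
    have hw : (star (B.mulVec u) ⬝ᵥ (B.mulVec u)).re ≤ q x * c := by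
      have e2 : star (B.mulVec u) ⬝ᵥ (B.mulVec u) = star u ⬝ᵥ (M x).mulVec u :=
        (dot_sqrt (hM.1 x) u u).symm
      have e3 : star u ⬝ᵥ (M x).mulVec u = star v ⬝ᵥ ((S * M x * S).mulVec v) := by
        rw [huv]; exact conj_form hSh (M x) v v
      have e4 : S * M x * S = (B * S)ᴴ * (B * S) := by
        rw [Matrix.conjTranspose_mul, hBh.eq, hSh.eq, ← (hM.1 x).sqrt_mul_self]
        simp only [Matrix.mul_assoc]
        rfl
      have e5 : star v ⬝ᵥ ((S * M x * S).mulVec v)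
          = star ((B * S).mulVec v) ⬝ᵥ ((B * S).mulVec v) := by
        rw [e4, dot_conjTranspose_mul]
      have e6 := frobenius_bound (B * S) v
      have e7 : ((B * S)ᴴ * (B * S)).trace = (ρ2 * M x).trace := by
        rw [Matrix.conjTranspose_mul, hBh.eq, hSh.eq]
        have eq1 : S * B * (B * S) = S * (M x * S) := by
          rw [← (hM.1 x).sqrt_mul_self]
          simp only [Matrix.mul_assoc]
          rfl
        rw [eq1, Matrix.trace_mul_comm, Matrix.mul_assoc, h2.sqrt_mul_self,
          Matrix.trace_mul_comm]
      have e8 : (star v ⬝ᵥ v).re = c := by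
        have h' : star v ⬝ᵥ v = star φ ⬝ᵥ ρ2.mulVec φ := (dot_sqrt h2 φ φ).symm
        rw [h', hc]
      rw [e2, e3, e5]
      calc (star ((B * S).mulVec v) ⬝ᵥ ((B * S).mulVec v)).re
          ≤ ((B * S)ᴴ * (B * S)).trace.re * (star v ⬝ᵥ v).re := e6
        _ = q x * c := by rw [e7, e8, hqdef]
    have hp' : (star (B.mulVec φ) ⬝ᵥ (B.mulVec φ)).re = p x := by
      rw [← dot_sqrt (hM.1 x) φ φ, hpdef]
    calc ‖star u ⬝ᵥ (M x).mulVec φ‖ ^ 2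
        = ‖star (B.mulVec u) ⬝ᵥ (B.mulVec φ)‖ ^ 2 := by rw [e1]
      _ ≤ (star (B.mulVec u) ⬝ᵥ (B.mulVec u)).re * (star (B.mulVec φ) ⬝ᵥ (B.mulVec φ)).re :=
          cs_dot _ _
      _ ≤ (q x * c) * p x := by
          rw [hp']
          exact mul_le_mul_of_nonneg_right hw (hp0 x)
      _ = (c * p x) * q x := by ring
  set θ : ℝ := 1 / (2 * (1 - α)) with hθdef
  have h1α : (0:ℝ) < 1 - α := by linarith
  have hθ0 : 0 < θ := by positivity
  have hθ1 : θ ≤ 1 := by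
    rw [hθdef, div_le_one (by positivity)]
    linarith
  set Q : ℝ := ∑ x, p x ^ α * q x ^ (1 - α) with hQdef
  have hsum_p : ∑ x, p x = 1 := by
    have h' := dot_mulVec_sum (star φ) φ M
    rw [hM.2, Matrix.one_mulVec, hφ] at h'
    calc ∑ x, p x = (∑ x, star φ ⬝ᵥ (M x).mulVec φ).re := by
          rw [Complex.re_sum]
      _ = 1 := by rw [h']; simp
  have hmain : c ≤ c ^ (1/2:ℝ) * Q ^ θ := by
    have step1 : c = (∑ x, star u ⬝ᵥ (M x).mulVec φ).re := by rw [hsum_t]; simp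
    have step2 : (∑ x, star u ⬝ᵥ (M x).mulVec φ).re ≤ ∑ x, Real.sqrt ((c * p x) * q x) := by
      rw [Complex.re_sum]
      refine Finset.sum_le_sum fun x _ => ?_
      exact le_trans (Complex.re_le_norm _) (Real.le_sqrt_of_sq_le (habs x))
    have step3 : ∀ x, Real.sqrt ((c * p x) * q x)
        = c ^ (1/2:ℝ) * ((p x ^ α * q x ^ (1 - α)) ^ θ * p x ^ (1 - θ)) := by
      intro x
      rw [Real.sqrt_eq_rpow, Real.mul_rpow (mul_nonneg hc0 (hp0 x)) (hq0 x),
        Real.mul_rpow hc0 (hp0 x), mul_assoc, rpow_split hα0 hα (hp0 x) (hq0 x)]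
    have step4 : ∑ x, (p x ^ α * q x ^ (1 - α)) ^ θ * p x ^ (1 - θ) ≤ Q ^ θ := by
      have h' := holder_sum (fun x => p x ^ α * q x ^ (1 - α)) p
        (fun x => mul_nonneg (Real.rpow_nonneg (hp0 x) _) (Real.rpow_nonneg (hq0 x) _))
        hp0 hθ0 hθ1
      rw [hsum_p, Real.one_rpow, mul_one] at h'
      exact h'
    calc c ≤ ∑ x, Real.sqrt ((c * p x) * q x) := step1 ▸ step2
      _ = c ^ (1/2:ℝ) * ∑ x, (p x ^ α * q x ^ (1 - α)) ^ θ * p x ^ (1 - θ) := by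
          rw [Finset.mul_sum]
          exact Finset.sum_congr rfl fun x _ => step3 x
      _ ≤ c ^ (1/2:ℝ) * Q ^ θ :=
          mul_le_mul_of_nonneg_left step4 (Real.rpow_nonneg hc0 _)
  have h12 : c ^ (1/2:ℝ) ≤ Q ^ θ := by
    have hcc : c ^ (1/2:ℝ) * c ^ (1/2:ℝ) = c := by
      rw [← Real.rpow_add hcpos]; norm_num
    have h' := hmain
    rw [← hcc] at h'
    exact le_of_mul_le_mul_left (by linarith [h']) (Real.rpow_pos_of_pos hcpos (1/2:ℝ))
  calc c ^ (1 - α) = (c ^ (1/2:ℝ)) ^ (2 * (1 - α)) := by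
        rw [← Real.rpow_mul hc0]
        congr 1
        ring
    _ ≤ (Q ^ θ) ^ (2 * (1 - α)) :=
        Real.rpow_le_rpow (Real.rpow_nonneg hc0 _) h12 (by linarith)
    _ = Q := by
        rw [← Real.rpow_mul hQ0]
        have h' : θ * (2 * (1 - α)) = 1 := by
          rw [hθdef]; field_simp
        rw [h', Real.rpow_one]

end Helpers

/-- for `0 < α ≤ 1/2` and a pure first argument,
`D_{f_α}^min(|φ⟩⟨φ| ‖ ρ2) = −⟨φ|ρ2|φ⟩^{1−α}`. -/

theorem stmt_15 (α : ℝ) (hα0 : 0 < α) (hα : α ≤ 1/2)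
    {n : ℕ} (φ : Fin n → ℂ) (hφ : star φ ⬝ᵥ φ = 1)
    (ρ2 : Matrix (Fin n) (Fin n) ℂ) (h2 : ρ2.PosSemidef) (h2t : ρ2.trace = 1)
    (hne : star φ ⬝ᵥ ρ2.mulVec φ ≠ 0) :
    Dfmin (falpha α) (Matrix.vecMulVec φ (star φ)) ρ2 =
      ((-(((star φ ⬝ᵥ ρ2.mulVec φ).re) ^ (1 - α)) : ℝ) : EReal) := by
  classical
  have hα1 : α < 1 := lt_of_le_of_lt hα (by norm_num)
  set P := Matrix.vecMulVec φ (star φ) with hP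
  set c : ℝ := (star φ ⬝ᵥ ρ2.mulVec φ).re with hc
  have hcC : star φ ⬝ᵥ ρ2.mulVec φ = (c : ℂ) := psd_form_eq_re h2 φ
  have hc0 : 0 ≤ c := psd_re_nonneg h2 φ
  have hcpos : 0 < c := by
    rcases eq_or_lt_of_le hc0 with h | h
    · exact absurd (by rw [hcC, ← h]; simp) hne
    · exact h
  have htr1 : ∀ A : Matrix (Fin n) (Fin n) ℂ, (P * A).trace = star φ ⬝ᵥ A.mulVec φ :=
    fun A => trace_vecMulVec_mul φ (star φ) A
  apply le_antisymm
  · -- upper bound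
    refine iSup_le fun m => iSup_le fun M => iSup_le fun hM => ?_
    set p : Fin m → ℝ := fun x => (star φ ⬝ᵥ (M x).mulVec φ).re with hpdef
    set q : Fin m → ℝ := fun x => ((ρ2 * M x).trace).re with hqdef
    have hp0 : ∀ x, 0 ≤ p x := fun x => psd_re_nonneg (hM.1 x) φ
    have hq0 : ∀ x, 0 ≤ q x := fun x => trace_mul_psd_nonneg h2 (hM.1 x)
    have hterm : ∀ x ∈ Finset.univ, gfun (falpha α) ((P * M x).trace.re) ((ρ2 * M x).trace.re)
        = ((-(p x ^ α * q x ^ (1 - α)) : ℝ) : EReal) := by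
      intro x _
      rw [htr1 (M x)]
      exact gfun_falpha hα0 hα1 (hp0 x) (hq0 x)
    rw [Finset.sum_congr rfl hterm]
    have hsum : ∑ x, ((-(p x ^ α * q x ^ (1 - α)) : ℝ) : EReal)
        = ((-(∑ x, p x ^ α * q x ^ (1 - α)) : ℝ) : EReal) := by
      rw [← coe_sum']
      congr 1
      exact Finset.sum_neg_distrib (f := fun x => p x ^ α * q x ^ (1 - α))
    rw [hsum, EReal.coe_le_coe_iff, neg_le_neg_iff]
    exact key_ineq hα0 hα φ hφ ρ2 h2 M hM
  · -- lower bound : explicit POVM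
    have hPmul : ∀ x : Fin n → ℂ, P.mulVec x = (star φ ⬝ᵥ x) • φ := by
      intro x
      funext i
      show (Matrix.vecMulVec φ (star φ)).mulVec x i = _
      simp only [Matrix.mulVec, Matrix.vecMulVec_apply, dotProduct, Pi.smul_apply,
        smul_eq_mul, Finset.sum_mul]
      refine Finset.sum_congr rfl fun j _ => ?_
      simp only [Pi.star_apply, RCLike.star_def]
      ring
    have hform : ∀ x : Fin n → ℂ,
        star x ⬝ᵥ P.mulVec x = ((Complex.normSq (star φ ⬝ᵥ x) : ℝ) : ℂ) := by
      intro x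
      rw [hPmul x, dotProduct_smul, smul_eq_mul]
      have h1 : star x ⬝ᵥ φ = star (star φ ⬝ᵥ x) := by rw [Matrix.star_dotProduct]
      rw [h1, Complex.star_def, Complex.mul_conj]
    have hPherm : P.IsHermitian := by
      show (Matrix.vecMulVec φ (star φ)).IsHermitian
      ext i j
      simp only [Matrix.conjTranspose_apply, Matrix.vecMulVec_apply, Pi.star_apply, star_mul',
        star_star]
      ring
    have hPpsd : P.PosSemidef := by
      refine Matrix.PosSemidef.of_dotProduct_mulVec_nonneg hPherm ?_
      intro x
      rw [hform x]
      exact Complex.zero_le_real.mpr (Complex.normSq_nonneg _)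
    have h1Ppsd : (1 - P).PosSemidef := by
      refine Matrix.PosSemidef.of_dotProduct_mulVec_nonneg ?_ ?_
      · exact (Matrix.isHermitian_one).sub hPherm
      · intro x
        rw [Matrix.sub_mulVec, dotProduct_sub, Matrix.one_mulVec, hform x,
          dot_self_real x]
        rw [← Complex.ofReal_sub]
        refine Complex.zero_le_real.mpr ?_
        rw [sub_nonneg, ← Complex.sq_norm]
        have := cs_dot φ x
        rw [hφ] at this
        simpa using this
    set Mv : Fin 2 → Matrix (Fin n) (Fin n) ℂ := ![P, 1 - P] with hMv
    have hPOVM : IsPOVM Mv := by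
      constructor
      · intro x
        fin_cases x
        · simpa [hMv] using hPpsd
        · simpa [hMv] using h1Ppsd
      · rw [Fin.sum_univ_two]
        simp only [hMv, Matrix.cons_val_zero, Matrix.cons_val_one, Matrix.head_cons]
        abel
    have htrPtr : P.trace = 1 := by
      have h' : P.trace = star φ ⬝ᵥ φ := by
        rw [hP]
        simp [Matrix.trace, Matrix.diag, Matrix.vecMulVec_apply, dotProduct, mul_comm]
      rw [h', hφ]
    have htrPP : (P * P).trace = 1 := by
      rw [htr1, hPmul, dotProduct_smul, hφ, smul_eq_mul, mul_one]
    have htrρ2P : (ρ2 * P).trace = (c : ℂ) := by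
      rw [Matrix.trace_mul_comm, hP, trace_vecMulVec_mul, hcC]
    have htr1P : (P * (1 - P)).trace = 0 := by
      rw [Matrix.mul_sub, Matrix.mul_one, Matrix.trace_sub, htrPtr, htrPP, sub_self]
    have htrρ2_1P : (ρ2 * (1 - P)).trace = ((1 - c : ℝ) : ℂ) := by
      rw [Matrix.mul_sub, Matrix.mul_one, Matrix.trace_sub, h2t, htrρ2P]
      push_cast
      ring
    have hq1 : 0 ≤ ((ρ2 * (1 - P)).trace).re := trace_mul_psd_nonneg h2 h1Ppsd
    have hMv0 : Mv 0 = P := rfl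
    have hMv1 : Mv 1 = 1 - P := rfl
    calc ((-(c ^ (1 - α)) : ℝ) : EReal)
        = ∑ x, gfun (falpha α) ((P * Mv x).trace.re) ((ρ2 * Mv x).trace.re) := by
          rw [Fin.sum_univ_two, hMv0, hMv1]
          have t0 : gfun (falpha α) ((P * P).trace.re) ((ρ2 * P).trace.re)
              = ((-(c ^ (1 - α)) : ℝ) : EReal) := by
            have e1 : (P * P).trace.re = 1 := by rw [htrPP]; simp
            have e2 : (ρ2 * P).trace.re = c := by rw [htrρ2P]; simp
            rw [e1, e2, gfun_falpha hα0 hα1 zero_le_one hc0]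
            norm_num [Real.one_rpow]
          have t1 : gfun (falpha α) ((P * (1 - P)).trace.re) ((ρ2 * (1 - P)).trace.re)
              = (0 : EReal) := by
            have e1 : (P * (1 - P)).trace.re = 0 := by rw [htr1P]; simp
            rw [e1, gfun_falpha hα0 hα1 le_rfl hq1, Real.zero_rpow (ne_of_gt hα0),
              zero_mul, neg_zero, EReal.coe_zero]
          rw [t0, t1, add_zero]
      _ ≤ Dfmin (falpha α) P ρ2 := by
          rw [Dfmin]
          exact le_iSup_of_le 2 (le_iSup_of_le Mv (le_iSup_of_le hPOVM le_rfl))
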